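/- Let d ≥ 1, let D ∈ ℝ^{d×d}, let γ : (0,∞) → ℝ^{d×d} be Bochner integrable, and let Σ ∈ ℝ^{d×d} be symmetric positive definite. Assume that D Σ + Σ Dᵀ + γ̂_Σ(ω) is positive definite for every ω ∈ ℝ. Then for every ζ ∈ ℂ with Re ζ ≥ 0 the matrix A(ζ) = ζ I + D + Lγ(ζ) ∈ ℂ^{d×d} is invertible. -/

import Mathlib

open MeasureTheory Matrix Set Filter
open scoped Matrix.Norms.L2Operator Real Topology ComplexOrder

noncomputable section

/-- The function `γ_Σ` built from a memory kernel `γ` and a symmetric matrix `Σ`: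
`γ_Σ(t) = γ(t)Σ` for `t > 0`, `γ_Σ(t) = Σ γ(-t)ᵀ` for `t < 0`,
and `γ_Σ(0) = (γ(0)Σ + Σγ(0)ᵀ)/2`. -/
def gammaSigma {d : ℕ} (γ : ℝ → Matrix (Fin d) (Fin d) ℝ) (S : Matrix (Fin d) (Fin d) ℝ)
    (t : ℝ) : Matrix (Fin d) (Fin d) ℝ :=
  if 0 < t then γ t * S
  else if t < 0 then S * (γ (-t))ᵀ
  else (2 : ℝ)⁻¹ • (γ 0 * S + S * (γ 0)ᵀ)

/-- Entrywise Fourier transform `ĥ(ω) = ∫_ℝ e^{-iωt} h(t) dt` of a matrix-valued function. -/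
def fourierMat {d : ℕ} (h : ℝ → Matrix (Fin d) (Fin d) ℝ) (ω : ℝ) :
    Matrix (Fin d) (Fin d) ℂ :=
  ∫ t : ℝ, Complex.exp (-(Complex.I * ω * t)) • (h t).map Complex.ofReal

/-- Entrywise Laplace transform `Lγ(ζ) = ∫₀^∞ e^{-ζt} γ(t) dt` of a matrix-valued function. -/
def laplaceMat {d : ℕ} (γ : ℝ → Matrix (Fin d) (Fin d) ℝ) (z : ℂ) :
    Matrix (Fin d) (Fin d) ℂ :=
  ∫ t in Ioi (0 : ℝ), Complex.exp (-(z * t)) • (γ t).map Complex.ofReal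

open Complex FourierTransform


lemma integrableOn_cexp_neg_mul_Ioi {c : ℂ} (hc : 0 < c.re) :
    IntegrableOn (fun t : ℝ => Complex.exp (-(c * t))) (Ioi 0) := by
  apply Integrable.mono' ((exp_neg_integrableOn_Ioi 0 hc).ofReal (𝕜 := ℂ)).norm
  · exact (Complex.continuous_exp.comp (by continuity)).aestronglyMeasurable.restrict
  · filter_upwards with t
    simp [Complex.norm_exp, mul_comm]

lemma integral_cexp_neg_mul_Ioi {c : ℂ} (hc : 0 < c.re) :
    ∫ t in Ioi (0:ℝ), Complex.exp (-(c * t)) = c⁻¹ := by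
  have hc0 : c ≠ 0 := fun h => by simp [h] at hc
  have hderiv : ∀ t ∈ Ioi (0:ℝ), HasDerivAt (fun t : ℝ => -c⁻¹ * Complex.exp (-(c * t)))
      (Complex.exp (-(c * t))) t := by
    intro t _
    have h1 : HasDerivAt (fun t : ℝ => -(c * t)) (-c) t := by
      exact (by simpa using ((Complex.ofRealCLM.hasDerivAt (x := t)).const_mul c).neg :
        HasDerivAt (-fun y : ℝ => c * (y:ℂ)) (-c) t)
    have h2 := (h1.cexp.const_mul (-c⁻¹))
    have : -c⁻¹ * (Complex.exp (-(c * ↑t)) * -c) = Complex.exp (-(c * ↑t)) := by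
      field_simp
    rwa [this] at h2
  have htend : Tendsto (fun t : ℝ => -c⁻¹ * Complex.exp (-(c * t))) atTop (𝓝 0) := by
    rw [tendsto_zero_iff_norm_tendsto_zero]
    have : Tendsto (fun t : ℝ => ‖-c⁻¹‖ * Real.exp (-(c.re * t))) atTop (𝓝 (‖-c⁻¹‖ * 0)) := by
      apply Tendsto.const_mul
      exact Real.tendsto_exp_atBot.comp (tendsto_neg_atBot_iff.2 ((tendsto_const_mul_atTop_of_pos hc).2 tendsto_id))
    simpa [Complex.norm_exp, norm_mul] using this
  have := integral_Ioi_of_hasDerivAt_of_tendsto (a := 0)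
    (f := fun t : ℝ => -c⁻¹ * Complex.exp (-(c * t)))
    (f' := fun t : ℝ => Complex.exp (-(c * t))) ?_ hderiv (integrableOn_cexp_neg_mul_Ioi hc) htend
  · simpa using this
  · exact (Continuous.continuousWithinAt (by continuity))

variable {σ : ℝ}

lemma integrable_exp_abs (hσ : 0 < σ) : Integrable (fun t : ℝ => Real.exp (-(σ * |t|))) := by
  have hIoi : IntegrableOn (fun t : ℝ => Real.exp (-(σ * |t|))) (Ioi 0) := by
    apply (exp_neg_integrableOn_Ioi 0 hσ).congr_fun (fun x hx => ?_) measurableSet_Ioi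
    rw [abs_of_pos hx, neg_mul]
  have hIci : IntegrableOn (fun t : ℝ => Real.exp (-(σ * |t|))) (Ici 0) :=
    (integrableOn_Ici_iff_integrableOn_Ioi).2 hIoi
  have hIic : IntegrableOn (fun t : ℝ => Real.exp (-(σ * |t|))) (Iic 0) := by
    have A : Integrable (Set.indicator (Ici (0:ℝ)) (fun t : ℝ => Real.exp (-(σ * |t|)))) :=
      (integrable_indicator_iff measurableSet_Ici).2 hIci
    have B := A.comp_neg
    have hfun : (fun x : ℝ => Set.indicator (Ici (0:ℝ))
        (fun t : ℝ => Real.exp (-(σ * |t|))) (-x)) =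
        Set.indicator (Iic (0:ℝ)) (fun t : ℝ => Real.exp (-(σ * |t|))) := by
      ext x
      by_cases hx : x ≤ 0 <;>
        simp [Set.indicator, hx, neg_nonneg, not_le.2, abs_neg]
    rw [hfun] at B
    exact (integrable_indicator_iff measurableSet_Iic).1 B
  rw [← integrableOn_univ, ← Iic_union_Ioi (a := (0:ℝ)), integrableOn_union]
  exact ⟨hIic, hIoi⟩

lemma fourier_exp_abs (hσ : 0 < σ) (w : ℝ) :
    𝓕 (fun t : ℝ => ((Real.exp (-(σ * |t|)) : ℝ) : ℂ)) w
      = ((2*σ) / (σ^2 + (2*π*w)^2) : ℝ) := by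
  have hint : Integrable (fun t : ℝ => ((Real.exp (-(σ * |t|)) : ℝ) : ℂ)) :=
    (integrable_exp_abs hσ).ofReal
  set g : ℝ → ℂ := fun v => Complex.exp (↑(-2 * π * v * w) * Complex.I) • ((Real.exp (-(σ * |v|)) : ℝ) : ℂ) with hg_def
  have hg : Integrable g :=
    hint.bdd_mul (c := 1) (Complex.continuous_exp.comp (by continuity)).aestronglyMeasurable
        (by filter_upwards with v; simp [Complex.norm_exp])
  set c₁ : ℂ := (σ : ℂ) + (2*π*w : ℝ) * Complex.I with hc₁
  set c₂ : ℂ := (σ : ℂ) - (2*π*w : ℝ) * Complex.I with hc₂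
  have hre₁ : c₁.re = σ := by simp [hc₁]
  have hre₂ : c₂.re = σ := by simp [hc₂]
  have E1 : ∫ v in Ioi (0:ℝ), g v = c₁⁻¹ := by
    rw [setIntegral_congr_fun measurableSet_Ioi
      (g := fun v : ℝ => Complex.exp (-(c₁ * v))) (fun v hv => ?_)]
    · exact integral_cexp_neg_mul_Ioi (by rw [hre₁]; exact hσ)
    · simp only [hg_def, smul_eq_mul, Complex.ofReal_exp, abs_of_pos (mem_Ioi.1 hv)]
      rw [← Complex.exp_add]
      congr 1
      push_cast [hc₁]
      ring
  have E2 : ∫ v in Iic (0:ℝ), g v = c₂⁻¹ := by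
    have := integral_comp_neg_Ioi (0:ℝ) g
    rw [neg_zero] at this
    rw [← this, setIntegral_congr_fun measurableSet_Ioi
      (g := fun v : ℝ => Complex.exp (-(c₂ * v))) (fun v hv => ?_)]
    · exact integral_cexp_neg_mul_Ioi (by rw [hre₂]; exact hσ)
    · simp only [hg_def, smul_eq_mul, Complex.ofReal_exp, abs_neg,
        abs_of_pos (mem_Ioi.1 hv)]
      rw [← Complex.exp_add]
      congr 1
      push_cast [hc₂]
      ring
  have hc₁0 : c₁ ≠ 0 := fun h => by rw [h] at hre₁; simp at hre₁; exact hσ.ne' hre₁.symm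
  have hc₂0 : c₂ ≠ 0 := fun h => by rw [h] at hre₂; simp at hre₂; exact hσ.ne' hre₂.symm
  have hprod : c₁ * c₂ = ((σ^2 + (2*π*w)^2 : ℝ) : ℂ) := by
    have : c₁ * c₂ = (σ:ℂ)^2 - ((2*π*w : ℝ):ℂ)^2 * Complex.I^2 := by rw [hc₁, hc₂]; ring
    rw [this, Complex.I_sq]
    push_cast
    ring
  have hsum : c₁ + c₂ = ((2*σ : ℝ) : ℂ) := by rw [hc₁, hc₂]; push_cast; ring
  have hden : ((σ^2 + (2*π*w)^2 : ℝ) : ℂ) ≠ 0 := by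
    rw [Ne, Complex.ofReal_eq_zero]
    positivity
  rw [Real.fourier_real_eq_integral_exp_smul, ← hg_def,
    ← intervalIntegral.integral_Iic_add_Ioi hg.integrableOn hg.integrableOn, E1, E2]
  rw [inv_add_inv hc₂0 hc₁0, add_comm c₂ c₁, mul_comm c₂ c₁, hsum, hprod, Complex.ofReal_div]

lemma poisson (hσ : 0 < σ) (t : ℝ) :
    ∫ u : ℝ, ((σ / (σ^2 + u^2) : ℝ) : ℂ) * Complex.exp (-(Complex.I * u * t))
      = (π : ℂ) * Real.exp (-(σ * |t|)) := by
  have h2π : (2*π : ℝ) ≠ 0 := by positivity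
  set f : ℝ → ℂ := fun s => ((Real.exp (-(σ * |s|)) : ℝ) : ℂ) with hf_def
  have hf : Integrable f := (integrable_exp_abs hσ).ofReal
  have hFf : 𝓕 f = fun w : ℝ => (((2*σ) / (σ^2 + (2*π*w)^2) : ℝ) : ℂ) :=
    funext fun w => fourier_exp_abs hσ w
  have hFint : Integrable (𝓕 f) := by
    rw [hFf]
    have h1 : Integrable fun w : ℝ => (1 + ((2*π/σ) * w)^2)⁻¹ :=
      integrable_inv_one_add_sq.comp_mul_left' (by positivity)
    have h2 : (fun w : ℝ => (2*σ) / (σ^2 + (2*π*w)^2)) =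
        fun w : ℝ => (2/σ) * (1 + ((2*π/σ) * w)^2)⁻¹ := by
      funext w
      rw [eq_comm, mul_inv_eq_iff_eq_mul₀ (by positivity), div_mul_eq_mul_div, eq_div_iff (by positivity)]
      field_simp
    have h3 : Integrable (fun w : ℝ => ((2*σ)/(σ^2+(2*π*w)^2) : ℝ)) := by
      rw [h2]; exact h1.const_mul _
    exact h3.ofReal
  have hcont : Continuous f := by
    apply Complex.continuous_ofReal.comp
    exact Real.continuous_exp.comp (continuous_const.mul _root_.continuous_abs).neg
  have hinv := hf.fourierInv_fourier_eq hFint (hcont.continuousAt (x := -t))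
  rw [Real.fourierInv_eq_fourier_neg, neg_neg, hFf,
    Real.fourier_real_eq_integral_exp_smul] at hinv
  -- hinv : ∫ u, cexp(↑(-2π u t) * I) • ↑(2σ/(σ²+(2πu)²)) = f (-t)
  set T : ℝ → ℂ := fun v => ((σ / (σ^2 + v^2) : ℝ) : ℂ) * Complex.exp (-(Complex.I * v * t)) with hT_def
  have hTeq : (fun u : ℝ => Complex.exp (↑(-2 * π * u * t) * Complex.I) •
      (((2*σ) / (σ^2 + (2*π*u)^2) : ℝ) : ℂ)) = fun u => (2:ℂ) * T (2*π*u) := by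
    funext u
    simp only [hT_def, smul_eq_mul]
    rw [mul_comm]
    push_cast
    ring_nf
  have hscale := MeasureTheory.Measure.integral_comp_mul_left T (2*π)
  rw [hTeq, integral_const_mul, hscale] at hinv
  have hπ : |(2*π)⁻¹| = (2*π)⁻¹ := abs_of_pos (by positivity)
  rw [hπ] at hinv
  have hft : f (-t) = ((Real.exp (-(σ * |t|)) : ℝ) : ℂ) := by simp [hf_def]
  rw [hft] at hinv
  have hπC : (π:ℂ) ≠ 0 := by simpa using Real.pi_ne_zero
  calc ∫ v, T v = ((π:ℂ) * 2 * (((2*π:ℝ):ℂ))⁻¹) * ∫ v, T v := by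
        rw [show (π:ℂ) * 2 * (((2*π:ℝ):ℂ))⁻¹ = 1 from by push_cast; field_simp, one_mul]
    _ = (π:ℂ) * ((2:ℂ) * ((2*π:ℝ)⁻¹ • ∫ v, T v)) := by
        rw [Complex.real_smul]; push_cast; ring
    _ = (π : ℂ) * Real.exp (-(σ * |t|)) := by rw [hinv]

def Fs (φ : ℝ → ℂ) (ω : ℝ) : ℂ := ∫ t : ℝ, Complex.exp (-(Complex.I * ω * t)) * φ t

lemma norm_cexpI (a b : ℝ) : ‖Complex.exp (-(Complex.I * a * b))‖ = 1 := by
  rw [Complex.norm_exp]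
  simp

lemma continuous_cexpI (a : ℝ) : Continuous fun t : ℝ => Complex.exp (-(Complex.I * a * t)) :=
  Complex.continuous_exp.comp (by continuity)

lemma Fs_integrand_integrable {φ : ℝ → ℂ} (hφ : Integrable φ) (ω : ℝ) :
    Integrable fun t : ℝ => Complex.exp (-(Complex.I * ω * t)) * φ t :=
  hφ.bdd_mul (c := 1) (continuous_cexpI ω).aestronglyMeasurable
    (by filter_upwards with t; rw [norm_cexpI])

lemma continuous_Fs {φ : ℝ → ℂ} (hφ : Integrable φ) : Continuous (Fs φ) := by
  apply continuous_of_dominated (bound := fun t => ‖φ t‖)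
  · exact fun ω => (Fs_integrand_integrable hφ ω).1
  · intro ω
    filter_upwards with t
    rw [norm_mul, norm_cexpI, one_mul]
  · exact hφ.norm
  · filter_upwards with t
    exact (Complex.continuous_exp.comp (by continuity)).mul continuous_const

lemma norm_Fs_le {φ : ℝ → ℂ} (hφ : Integrable φ) (ω : ℝ) :
    ‖Fs φ ω‖ ≤ ∫ t, ‖φ t‖ := by
  refine (norm_integral_le_integral_norm _).trans (le_of_eq ?_)
  congr 1
  funext t
  rw [norm_mul, norm_cexpI, one_mul]

lemma key_nonneg {φ : ℝ → ℂ} (hφ : Integrable φ) (c : ℂ)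
    (hc : ∀ ω : ℝ, 0 < c + Fs φ ω) {σ : ℝ} (hσ : 0 < σ) (ω : ℝ) :
    0 ≤ (c + ∫ t : ℝ, ((Real.exp (-(σ * |t|)) : ℝ) : ℂ) *
      Complex.exp (-(Complex.I * ω * t)) * φ t).re := by
  have hπC : (π:ℂ) ≠ 0 := by simpa using Real.pi_ne_zero
  set K : ℝ → ℝ := fun u => σ / (σ^2 + u^2) with hK_def
  have hKpos : ∀ u, 0 < K u := fun u => div_pos hσ (by positivity)
  have hKint : Integrable K := by
    have h1 : Integrable fun u : ℝ => (1 + (σ⁻¹*u)^2)⁻¹ :=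
      integrable_inv_one_add_sq.comp_mul_left' (inv_ne_zero hσ.ne')
    have hKeq : (fun u : ℝ => σ⁻¹ * (1 + (σ⁻¹*u)^2)⁻¹) = K := by
      funext u
      rw [hK_def, eq_comm, div_eq_iff (by positivity)]
      field_simp
    rw [← hKeq]
    exact h1.const_mul _
  have hKC : ∫ u : ℝ, ((K u : ℝ) : ℂ) = (π : ℂ) := by
    have h0 := poisson hσ 0
    simp only [Complex.ofReal_zero, mul_zero, neg_zero, Complex.exp_zero, mul_one,
      abs_zero, Real.exp_zero] at h0
    rw [hK_def]
    simpa using h0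
  have hrepr : ∀ t : ℝ, ((Real.exp (-(σ*|t|)) : ℝ) : ℂ)
      = (π:ℂ)⁻¹ * ∫ u : ℝ, ((K u : ℝ) : ℂ) * Complex.exp (-(Complex.I * u * t)) := by
    intro t
    rw [poisson hσ t, ← mul_assoc, inv_mul_cancel₀ hπC, one_mul]
  -- Fubini setup
  set F2 : ℝ → ℝ → ℂ := fun t u =>
    (((K u : ℝ) : ℂ) * Complex.exp (-(Complex.I * u * t))) *
      (Complex.exp (-(Complex.I * ω * t)) * φ t) with hF2_def
  have hF2int : Integrable (Function.uncurry F2) (volume.prod volume) := by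
    have hbound : Integrable (fun p : ℝ × ℝ => ‖φ p.1‖ * K p.2) (volume.prod volume) :=
      hφ.norm.mul_prod hKint
    have hKcont : Continuous K := by
      apply Continuous.div continuous_const (by continuity)
      intro u; positivity
    have hmeas : AEStronglyMeasurable (Function.uncurry F2) (volume.prod volume) := by
      apply AEStronglyMeasurable.mul
      · exact ((Complex.continuous_ofReal.comp (hKcont.comp continuous_snd)).mul
          (Complex.continuous_exp.comp (by continuity))).aestronglyMeasurable
      · exact ((Complex.continuous_exp.comp (by continuity)).aestronglyMeasurable).mul
          (hφ.1.comp_fst)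
    apply Integrable.mono' hbound hmeas
    filter_upwards with p
    rw [Function.uncurry]
    simp only [hF2_def]
    rw [norm_mul, norm_mul, norm_mul, norm_cexpI, norm_cexpI, mul_one, one_mul,
      Complex.norm_real, Real.norm_eq_abs, abs_of_pos (hKpos _)]
    exact le_of_eq (mul_comm _ _)
  have hswap : ∫ t, ∫ u, F2 t u = ∫ u, ∫ t, F2 t u := integral_integral_swap hF2int
  have hinner : ∀ u : ℝ, ∫ t, F2 t u = ((K u : ℝ) : ℂ) * Fs φ (ω + u) := by
    intro u
    rw [Fs, ← integral_const_mul]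
    congr 1
    funext t
    rw [show (-(Complex.I * (↑(ω+u):ℂ) * (t:ℂ))) =
      -(Complex.I * u * t) + -(Complex.I * ω * t) from by push_cast; ring, Complex.exp_add]
    ring
  have hstep1 : (∫ t : ℝ, ((Real.exp (-(σ*|t|)) : ℝ) : ℂ) *
      Complex.exp (-(Complex.I * ω * t)) * φ t) = (π:ℂ)⁻¹ * ∫ t, ∫ u, F2 t u := by
    rw [← integral_const_mul]
    congr 1
    funext t
    rw [hrepr t, mul_assoc, mul_assoc, ← integral_mul_const]
  have hint1 : Integrable fun u : ℝ => ((K u : ℝ) : ℂ) * c := hKint.ofReal.mul_const c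
  have hmeasFs : AEStronglyMeasurable (fun u : ℝ => Fs φ (ω + u)) volume :=
    ((continuous_Fs hφ).comp (continuous_const.add continuous_id)).aestronglyMeasurable
  have hint2 : Integrable fun u : ℝ => ((K u : ℝ) : ℂ) * Fs φ (ω + u) := by
    refine (hKint.ofReal.bdd_mul (c := ∫ t, ‖φ t‖) hmeasFs ?_).congr
      (Filter.Eventually.of_forall fun u => mul_comm _ _)
    filter_upwards with u
    exact norm_Fs_le hφ _
  have hc' : c = (π:ℂ)⁻¹ * ∫ u : ℝ, ((K u : ℝ) : ℂ) * c := by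
    rw [integral_mul_const, hKC, ← mul_assoc, inv_mul_cancel₀ hπC, one_mul]
  have hmain : c + (∫ t : ℝ, ((Real.exp (-(σ*|t|)) : ℝ) : ℂ) *
      Complex.exp (-(Complex.I * ω * t)) * φ t)
      = (π:ℂ)⁻¹ * ∫ u : ℝ, ((K u : ℝ) : ℂ) * (c + Fs φ (ω + u)) := by
    rw [hstep1, hswap]
    conv_lhs => rw [hc']
    rw [← mul_add, ← integral_add hint1 (by simpa only [hinner] using hint2)]
    congr 1
    congr 1
    funext u
    rw [hinner u]
    ring
  rw [hmain]
  have hGint : Integrable fun u : ℝ => ((K u : ℝ) : ℂ) * (c + Fs φ (ω + u)) := by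
    have := hint1.add hint2
    apply this.congr
    filter_upwards with u
    simp only [Pi.add_apply]
    ring
  have hre := integral_re hGint
  simp only [RCLike.re_to_complex] at hre
  rw [show ((π:ℂ)⁻¹) = ((π⁻¹ : ℝ) : ℂ) from by push_cast; ring, Complex.re_ofReal_mul, ← hre]
  apply mul_nonneg (by positivity)
  apply integral_nonneg
  intro u
  have h1 : 0 ≤ (c + Fs φ (ω + u)).re := by
    have := (Complex.lt_def.1 (hc (ω + u))).1
    simpa using this.le
  have h2 : (0:ℝ) ≤ (((K u : ℝ) : ℂ) * (c + Fs φ (ω + u))).re := by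
    rw [Complex.re_ofReal_mul]
    exact mul_nonneg (hKpos u).le h1
  exact h2

section MatrixAux

variable {d : ℕ}

/-- quadratic form CLM -/
def quadCLM (x y : Fin d → ℂ) : Matrix (Fin d) (Fin d) ℂ →L[ℂ] ℂ :=
  LinearMap.toContinuousLinearMap
    { toFun := fun M => dotProduct (star x) (M.mulVec y)
      map_add' := fun M N => by simp [Matrix.add_mulVec, dotProduct_add]
      map_smul' := fun c M => by simp [Matrix.smul_mulVec] }

@[simp] lemma quadCLM_apply (x y : Fin d → ℂ) (M : Matrix (Fin d) (Fin d) ℂ) :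
    quadCLM x y M = dotProduct (star x) (M.mulVec y) := rfl

/-- entrywise complexification CLM -/
def mapCLM : Matrix (Fin d) (Fin d) ℝ →L[ℝ] Matrix (Fin d) (Fin d) ℂ :=
  LinearMap.toContinuousLinearMap
    { toFun := fun M => M.map Complex.ofReal
      map_add' := fun M N => by ext i j; simp
      map_smul' := fun c M => by ext i j; simp [Complex.real_smul] }

@[simp] lemma mapCLM_apply (M : Matrix (Fin d) (Fin d) ℝ) :
    (mapCLM M : Matrix (Fin d) (Fin d) ℂ) = M.map Complex.ofReal := rfl

lemma mapRC_mul (M N : Matrix (Fin d) (Fin d) ℝ) :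
    (M * N).map Complex.ofReal = M.map Complex.ofReal * N.map Complex.ofReal := by
  ext i j
  simp [Matrix.mul_apply, Matrix.map_apply]

lemma mapRC_add (M N : Matrix (Fin d) (Fin d) ℝ) :
    (M + N).map Complex.ofReal = M.map Complex.ofReal + N.map Complex.ofReal := by
  ext i j; simp

lemma mapRC_conjTranspose (M : Matrix (Fin d) (Fin d) ℝ) :
    (M.map Complex.ofReal)ᴴ = Mᵀ.map Complex.ofReal := by
  ext i j
  simp [Matrix.conjTranspose_apply, Matrix.map_apply, Complex.conj_ofReal]

lemma conj_quad (M : Matrix (Fin d) (Fin d) ℂ) (x : Fin d → ℂ) :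
    (starRingEnd ℂ) (dotProduct (star x) (M.mulVec x))
      = dotProduct (star x) (Mᴴ.mulVec x) := by
  have h1 : star (dotProduct (star x) (M.mulVec x))
      = dotProduct (star (M.mulVec x)) x := by
    rw [Matrix.star_dotProduct, star_star]
  rw [show (starRingEnd ℂ) (dotProduct (star x) (M.mulVec x))
      = star (dotProduct (star x) (M.mulVec x)) from rfl, h1,
    Matrix.star_mulVec, ← Matrix.dotProduct_mulVec]

lemma posdef_quad_re_pos {S : Matrix (Fin d) (Fin d) ℝ} (hS : S.PosDef)
    {x : Fin d → ℂ} (hx : x ≠ 0) :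
    0 < (dotProduct (star x) ((S.map Complex.ofReal).mulVec x)).re := by
  classical
  set a : Fin d → ℝ := fun i => (x i).re with ha
  set b : Fin d → ℝ := fun i => (x i).im with hb
  have key : (dotProduct (star x) ((S.map Complex.ofReal).mulVec x)).re
      = dotProduct a (S.mulVec a) + dotProduct b (S.mulVec b) := by
    simp only [dotProduct, Matrix.mulVec, Pi.star_apply, Complex.re_sum,
      Matrix.map_apply, Finset.mul_sum, ha, hb]
    rw [← Finset.sum_add_distrib]
    refine Finset.sum_congr rfl fun i _ => ?_
    rw [← Finset.sum_add_distrib]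
    refine Finset.sum_congr rfl fun j _ => ?_
    simp [Complex.mul_re, Complex.mul_im, RCLike.star_def, Complex.conj_re, Complex.conj_im]
  rw [key]
  have hab : a ≠ 0 ∨ b ≠ 0 := by
    by_contra h
    push_neg at h
    apply hx
    funext i
    have h1 := congrFun h.1 i
    have h2 := congrFun h.2 i
    simp only [ha, hb, Pi.zero_apply] at h1 h2
    exact Complex.ext h1 h2
  have hsd : ∀ v : Fin d → ℝ, 0 ≤ dotProduct v (S.mulVec v) := by
    intro v
    have := hS.posSemidef.dotProduct_mulVec_nonneg v
    simpa using this
  have hpd : ∀ v : Fin d → ℝ, v ≠ 0 → 0 < dotProduct v (S.mulVec v) := by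
    intro v hv
    have := hS.dotProduct_mulVec_pos hv
    simpa using this
  rcases hab with h | h
  · exact add_pos_of_pos_of_nonneg (hpd a h) (hsd b)
  · exact add_pos_of_nonneg_of_pos (hsd a) (hpd b h)

end MatrixAux

section IntAux

variable {d : ℕ}

lemma integrableOn_neg_of_Ioi {E : Type*} [NormedAddCommGroup E] {f : ℝ → E}
    (h : IntegrableOn f (Ioi 0)) : IntegrableOn (fun t => f (-t)) (Iio 0) := by
  have A : Integrable (Set.indicator (Ioi (0:ℝ)) f) :=
    (integrable_indicator_iff measurableSet_Ioi).2 h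
  have B := A.comp_neg
  have hfun : (fun t : ℝ => Set.indicator (Ioi (0:ℝ)) f (-t))
      = Set.indicator (Iio (0:ℝ)) (fun t => f (-t)) := by
    ext t
    by_cases ht : t < 0 <;> simp [Set.indicator_apply, mem_Ioi, mem_Iio, neg_pos, ht]
  rw [hfun] at B
  exact (integrable_indicator_iff measurableSet_Iio).1 B

def mulRightCLM (S : Matrix (Fin d) (Fin d) ℝ) :
    Matrix (Fin d) (Fin d) ℝ →L[ℝ] Matrix (Fin d) (Fin d) ℝ :=
  LinearMap.toContinuousLinearMap
    { toFun := fun M => M * S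
      map_add' := fun M N => Matrix.add_mul M N S
      map_smul' := fun c M => Matrix.smul_mul c M S }

def mulLeftTransCLM (S : Matrix (Fin d) (Fin d) ℝ) :
    Matrix (Fin d) (Fin d) ℝ →L[ℝ] Matrix (Fin d) (Fin d) ℝ :=
  LinearMap.toContinuousLinearMap
    { toFun := fun M => S * Mᵀ
      map_add' := fun M N => by
        show S * (M + N)ᵀ = S * Mᵀ + S * Nᵀ
        rw [Matrix.transpose_add, Matrix.mul_add]
      map_smul' := fun c M => by
        show S * (c • M)ᵀ = c • (S * Mᵀ)
        rw [Matrix.transpose_smul, Matrix.mul_smul] }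

lemma integrable_gammaSigma_aux {γ : ℝ → Matrix (Fin d) (Fin d) ℝ}
    {S : Matrix (Fin d) (Fin d) ℝ} (hγ : IntegrableOn γ (Ioi 0)) :
    Integrable (gammaSigma γ S) := by
  have h1 : IntegrableOn (fun t => γ t * S) (Ioi 0) :=
    (mulRightCLM S).integrable_comp hγ
  have h1' : IntegrableOn (gammaSigma γ S) (Ioi 0) := by
    apply h1.congr_fun (fun t ht => ?_) measurableSet_Ioi
    simp [gammaSigma, mem_Ioi.1 ht]
  have h2 : IntegrableOn (fun t => S * (γ t)ᵀ) (Ioi 0) :=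
    (mulLeftTransCLM S).integrable_comp hγ
  have h2' : IntegrableOn (gammaSigma γ S) (Iio 0) := by
    apply (integrableOn_neg_of_Ioi h2).congr_fun (fun t ht => ?_) measurableSet_Iio
    have ht' : t < 0 := mem_Iio.1 ht
    simp [gammaSigma, ht', not_lt.2 ht'.le, lt_asymm ht']
  have h3 : IntegrableOn (gammaSigma γ S) (Iio 0 ∪ Ioi 0) :=
    integrableOn_union.2 ⟨h2', h1'⟩
  rw [Set.Iio_union_Ioi] at h3
  rw [← integrableOn_univ]
  apply h3.congr_set_ae
  refine (ae_eq_univ.2 ?_).symm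
  simp

end IntAux

/-- Paley–Wiener criterion: if `D Σ + Σ Dᵀ + γ̂_Σ(ω)` is positive definite for
every `ω ∈ ℝ`, then `A(ζ) = ζ I + D + Lγ(ζ)` is invertible for every `ζ` with `Re ζ ≥ 0`. -/
theorem paleyWiener_matrix_invertible {d : ℕ} (hd : 1 ≤ d)
    (D : Matrix (Fin d) (Fin d) ℝ)
    (γ : ℝ → Matrix (Fin d) (Fin d) ℝ) (hγ : IntegrableOn γ (Ioi 0))
    (S : Matrix (Fin d) (Fin d) ℝ) (hS : S.PosDef)
    (hpos : ∀ ω : ℝ,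
      ((D * S + S * Dᵀ).map Complex.ofReal + fourierMat (gammaSigma γ S) ω).PosDef) :
    ∀ ζ : ℂ, 0 ≤ ζ.re →
      IsUnit (ζ • (1 : Matrix (Fin d) (Fin d) ℂ) + D.map Complex.ofReal + laplaceMat γ ζ) := by
  classical
  intro ζ hζ
  set sig : ℝ := ζ.re with hsig
  set om : ℝ := ζ.im with hom
  have hζeq : (sig:ℂ) + om * Complex.I = ζ := Complex.re_add_im ζ
  set Sc : Matrix (Fin d) (Fin d) ℂ := S.map Complex.ofReal with hScdef
  have hSsymm : Sᵀ = S := by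
    ext i j
    simpa using congrFun (congrFun hS.1 i) j
  have hScH : Scᴴ = Sc := by rw [hScdef, mapRC_conjTranspose, hSsymm]
  set A : Matrix (Fin d) (Fin d) ℂ :=
    ζ • (1 : Matrix (Fin d) (Fin d) ℂ) + D.map Complex.ofReal + laplaceMat γ ζ with hA
  by_contra hAunit
  have hdet : A.det = 0 := by
    by_contra hdd
    exact hAunit ((Matrix.isUnit_iff_isUnit_det A).2 (isUnit_iff_ne_zero.2 hdd))
  have hdetH : Aᴴ.det = 0 := by rw [Matrix.det_conjTranspose, hdet, star_zero]
  obtain ⟨x, hx0, hxA⟩ := Matrix.exists_mulVec_eq_zero_iff.2 hdetH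
  set y : Fin d → ℂ := Sc.mulVec x with hydef
  set φ : ℝ → ℂ :=
    fun t => dotProduct (star x) (((gammaSigma γ S t).map Complex.ofReal).mulVec x)
    with hφdef
  set c' : ℂ := dotProduct (star x) (((D*S+S*Dᵀ).map Complex.ofReal).mulVec x) with hc'def
  set s : ℂ := dotProduct (star x) (Sc.mulVec x) with hsdef
  have hgsInt : Integrable (gammaSigma γ S) := integrable_gammaSigma_aux hγ
  have hgsMapInt : Integrable fun t => (gammaSigma γ S t).map Complex.ofReal :=
    mapCLM.integrable_comp hgsInt
  have hφint : Integrable φ := by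
    have h := (((quadCLM x x).restrictScalars ℝ).comp mapCLM).integrable_comp hgsInt
    apply h.congr
    filter_upwards with t
    simp [hφdef]
  -- Fourier data
  have hmatFourInt : ∀ w : ℝ, Integrable fun t : ℝ =>
      Complex.exp (-(Complex.I*w*t)) • (gammaSigma γ S t).map Complex.ofReal := by
    intro w
    apply Integrable.mono' hgsMapInt.norm
      (((continuous_cexpI w).aestronglyMeasurable).smul hgsMapInt.1)
    filter_upwards with t
    rw [Pi.smul_apply', norm_smul, norm_cexpI, one_mul]
  have hquadFour : ∀ w : ℝ, dotProduct (star x)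
      ((fourierMat (gammaSigma γ S) w).mulVec x) = Fs φ w := by
    intro w
    have h1 : dotProduct (star x) ((fourierMat (gammaSigma γ S) w).mulVec x)
        = quadCLM x x (fourierMat (gammaSigma γ S) w) := rfl
    rw [h1, fourierMat, ← ContinuousLinearMap.integral_comp_comm _ (hmatFourInt w), Fs]
    congr 1
    funext t
    rw [ContinuousLinearMap.map_smul]
    simp [hφdef, smul_eq_mul]
  have hc : ∀ w : ℝ, 0 < c' + Fs φ w := by
    intro w
    have hp := (hpos w).dotProduct_mulVec_pos hx0
    rw [Matrix.add_mulVec, dotProduct_add, hquadFour w] at hp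
    exact hp
  -- E and its properties
  set E : ℝ → ℂ := fun t => ((Real.exp (-(sig * |t|)) : ℝ) : ℂ) *
    Complex.exp (-(Complex.I * om * t)) * φ t with hEdef
  have hEint : Integrable E := by
    apply Integrable.mono' hφint.norm
    · exact (((Complex.continuous_ofReal.comp
        (Real.continuous_exp.comp (continuous_const.mul _root_.continuous_abs).neg)).mul
        (continuous_cexpI om)).aestronglyMeasurable).mul hφint.1
    · filter_upwards with t
      rw [hEdef]
      rw [norm_mul, norm_mul, norm_cexpI, mul_one, Complex.norm_real, Real.norm_eq_abs,
        abs_of_pos (Real.exp_pos _)]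
      have h1 : Real.exp (-(sig * |t|)) ≤ 1 := by
        apply Real.exp_le_one_iff.2
        simp only [neg_nonpos]
        positivity
      nlinarith [norm_nonneg (φ t)]
  -- laplace quadratic form
  have hLint : Integrable (fun t : ℝ => Complex.exp (-(ζ*t)) • (γ t).map Complex.ofReal)
      (volume.restrict (Ioi 0)) := by
    have hg : Integrable (fun t => (γ t).map Complex.ofReal) (volume.restrict (Ioi 0)) :=
      mapCLM.integrable_comp hγ
    apply Integrable.mono' hg.norm
      (((Complex.continuous_exp.comp (by continuity)).aestronglyMeasurable.restrict).smul hg.1)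
    filter_upwards [ae_restrict_mem measurableSet_Ioi] with t ht
    rw [Pi.smul_apply', norm_smul]
    have h1 : ‖Complex.exp (-(ζ * t))‖ ≤ 1 := by
      rw [Complex.norm_exp]
      apply Real.exp_le_one_iff.2
      have : (-(ζ * t)).re = -(sig * t) := by
        rw [← hζeq]; push_cast; simp [Complex.add_re, Complex.mul_re]
      rw [this]
      simp only [neg_nonpos]
      exact mul_nonneg hζ (mem_Ioi.1 ht).le
    exact mul_le_of_le_one_left (norm_nonneg _) h1
  have hquadL : dotProduct (star x) ((laplaceMat γ ζ).mulVec y)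
      = ∫ t in Ioi (0:ℝ), Complex.exp (-(ζ*t)) *
        dotProduct (star x) (((γ t).map Complex.ofReal).mulVec y) := by
    have h1 : dotProduct (star x) ((laplaceMat γ ζ).mulVec y)
        = quadCLM x y (laplaceMat γ ζ) := rfl
    rw [h1, laplaceMat, ← ContinuousLinearMap.integral_comp_comm _ hLint]
    congr 1
    funext t
    rw [ContinuousLinearMap.map_smul]
    simp [smul_eq_mul]
  -- identify integrand with E on Ioi
  have hexp_pos : ∀ t : ℝ, 0 < t → Complex.exp (-(ζ*t))
      = ((Real.exp (-(sig * |t|)) : ℝ) : ℂ) * Complex.exp (-(Complex.I * om * t)) := by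
    intro t ht
    rw [abs_of_pos ht, Complex.ofReal_exp, ← Complex.exp_add]
    congr 1
    rw [← hζeq]
    push_cast
    ring
  have hφneg : ∀ t : ℝ, 0 < t → (starRingEnd ℂ) (φ t) = φ (-t) := by
    intro t ht
    rw [hφdef]
    simp only
    rw [conj_quad]
    congr 2
    rw [show gammaSigma γ S t = γ t * S from by simp [gammaSigma, ht]]
    rw [show gammaSigma γ S (-t) = S * (γ t)ᵀ from by
      simp [gammaSigma, neg_neg, not_lt.2 (neg_nonpos.2 ht.le), neg_lt_zero.2 ht,
        lt_asymm (neg_lt_zero.2 ht)]]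
    rw [mapRC_conjTranspose, Matrix.transpose_mul, hSsymm]
  have hQL : dotProduct (star x) ((laplaceMat γ ζ).mulVec y)
      = ∫ t in Ioi (0:ℝ), E t := by
    rw [hquadL]
    apply setIntegral_congr_fun measurableSet_Ioi
    intro t ht
    have ht' := mem_Ioi.1 ht
    beta_reduce
    rw [hexp_pos t ht', hEdef]
    simp only
    congr 1
    simp only [hφdef, hydef, hScdef]
    rw [Matrix.mulVec_mulVec, ← mapRC_mul]
    simp [gammaSigma, ht']
  -- conjugate of laplace quad
  have hconjQL : (starRingEnd ℂ) (dotProduct (star x) ((laplaceMat γ ζ).mulVec y))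
      = ∫ t in Iic (0:ℝ), E t := by
    rw [hQL, ← integral_conj]
    have h2 : ∫ t in Iic (0:ℝ), E t = ∫ t in Ioi (0:ℝ), E (-t) := by
      rw [integral_comp_neg_Ioi]
      norm_num
    rw [h2]
    apply setIntegral_congr_fun measurableSet_Ioi
    intro t ht
    have ht' := mem_Ioi.1 ht
    beta_reduce
    rw [hEdef]
    simp only
    rw [_root_.map_mul, _root_.map_mul, Complex.conj_ofReal, hφneg t ht', ← Complex.exp_conj]
    rw [abs_neg]
    congr 2
    simp only [map_neg, _root_.map_mul, Complex.conj_I, Complex.conj_ofReal]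
    push_cast
    ring
  -- Q and its vanishing
  set Q : ℂ := dotProduct (star x) ((A * Sc).mulVec x) with hQdef
  have hQ0 : Q = 0 := by
    rw [hQdef, ← Matrix.mulVec_mulVec, Matrix.dotProduct_mulVec]
    have hv : Matrix.vecMul (star x) A = 0 := by
      have h1 : star (Aᴴ.mulVec x) = Matrix.vecMul (star x) A := by
        rw [Matrix.star_mulVec, Matrix.conjTranspose_conjTranspose]
      rw [← h1, hxA, star_zero]
    rw [hv, zero_dotProduct]
  -- decomposition of Q
  have hterm1 : dotProduct (star x) (((ζ • (1 : Matrix (Fin d) (Fin d) ℂ)) * Sc).mulVec x)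
      = ζ * s := by
    rw [Matrix.smul_mul, Matrix.one_mul, Matrix.smul_mulVec, dotProduct_smul,
      smul_eq_mul, hsdef]
  have hterm2 : ((D.map Complex.ofReal) * Sc) = (D*S).map Complex.ofReal := by
    rw [hScdef, ← mapRC_mul]
  have hterm3 : dotProduct (star x) (((laplaceMat γ ζ) * Sc).mulVec x)
      = dotProduct (star x) ((laplaceMat γ ζ).mulVec y) := by
    rw [← Matrix.mulVec_mulVec, hydef]
  have hQdec : Q = ζ * s + dotProduct (star x) (((D*S).map Complex.ofReal).mulVec x)
      + ∫ t in Ioi (0:ℝ), E t := by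
    rw [hQdef, hA, Matrix.add_mul, Matrix.add_mul, Matrix.add_mulVec, Matrix.add_mulVec,
      dotProduct_add, dotProduct_add, hterm1, hterm2, hterm3, hQL]
  -- conjugates
  have hconjs : (starRingEnd ℂ) s = s := by
    rw [hsdef, conj_quad, hScH]
  have hconjDS : (starRingEnd ℂ)
      (dotProduct (star x) (((D*S).map Complex.ofReal).mulVec x))
      = dotProduct (star x) (((S*Dᵀ).map Complex.ofReal).mulVec x) := by
    rw [conj_quad, mapRC_conjTranspose, Matrix.transpose_mul, hSsymm]
  have hconjInt : (starRingEnd ℂ) (∫ t in Ioi (0:ℝ), E t) = ∫ t in Iic (0:ℝ), E t := by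
    rw [← hQL]
    exact hconjQL
  have hconjQ : (starRingEnd ℂ) Q = (starRingEnd ℂ) ζ * s
      + dotProduct (star x) (((S*Dᵀ).map Complex.ofReal).mulVec x)
      + ∫ t in Iic (0:ℝ), E t := by
    rw [hQdec, map_add, map_add, _root_.map_mul, hconjs, hconjDS, hconjInt]
  have hcc : dotProduct (star x) (((D*S).map Complex.ofReal).mulVec x)
      + dotProduct (star x) (((S*Dᵀ).map Complex.ofReal).mulVec x) = c' := by
    rw [hc'def, mapRC_add, Matrix.add_mulVec, dotProduct_add]
  have hsum : Q + (starRingEnd ℂ) Q = ((2*sig : ℝ) : ℂ) * s + (c' + ∫ t : ℝ, E t) := by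
    have hIadd : (∫ t in Iic (0:ℝ), E t) + ∫ t in Ioi (0:ℝ), E t = ∫ t : ℝ, E t :=
      intervalIntegral.integral_Iic_add_Ioi hEint.integrableOn hEint.integrableOn
    have hzz : ζ + (starRingEnd ℂ) ζ = ((2*sig : ℝ) : ℂ) := by
      rw [Complex.add_conj]
    rw [hconjQ, hQdec, ← hzz, ← hcc, ← hIadd]
    ring
  -- real parts
  have hsre : 0 < s.re := by
    rw [hsdef, hScdef]
    exact posdef_quad_re_pos hS hx0
  have hQre2 : Q.re + Q.re = 2*sig * s.re + (c' + ∫ t : ℝ, E t).re := by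
    have h1 : (Q + (starRingEnd ℂ) Q).re = Q.re + Q.re := by
      simp [Complex.add_re, Complex.conj_re]
    rw [hsum] at h1
    rw [← h1, Complex.add_re, Complex.re_ofReal_mul]
  have hfinal : 0 < Q.re + Q.re := by
    rcases hζ.eq_or_lt with h0 | hsigpos
    · have hE_Fs : ∫ t : ℝ, E t = Fs φ om := by
        rw [Fs]
        congr 1
        funext t
        rw [hEdef]
        simp [← h0]
      have hp := (Complex.lt_def.1 (hc om)).1
      rw [hQre2, hE_Fs, ← h0]
      simpa using hp
    · have hkey := key_nonneg hφint c' hc hsigpos om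
      have hkey' : 0 ≤ (c' + ∫ t : ℝ, E t).re := hkey
      have h2 : 0 < 2 * sig * s.re := by
        have h3 := mul_pos hsigpos hsre
        linarith
      rw [hQre2]
      linarith
  rw [hQ0] at hfinal
  simp at hfinal
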